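/- Define f : ℝ → ℝ by f(x) = (25/2)x² for x < 1, f(x) = (1/2)x² + 24x − 12 for 1 ≤ x < 2, and f(x) = (25/2)x² − 24x + 36 for x ≥ 2. Then f is differentiable, attains its minimum at x* = 0, and satisfies the sector condition (13x − f′(x))(25x − f′(x)) ≤ 0 for all x ∈ ℝ; moreover, since 25/13 < 3 + 2√2, the heavy ball iteration x_{t+1} = x_t − α f′(x_t) + β(x_t − x_{t−1}) with α = 4/(5 + √13)² and β = ((5 − √13)/(5 + √13))² converges to 0 from every pair of initial points x_{−1}, x₀ ∈ ℝ. -/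

import Mathlib

open Real Filter

noncomputable def lrpF (x : ℝ) : ℝ :=
  if x < 1 then 25 / 2 * x ^ 2
  else if x < 2 then 1 / 2 * x ^ 2 + 24 * x - 12
  else 25 / 2 * x ^ 2 - 24 * x + 36

noncomputable def lrpG (x : ℝ) : ℝ :=
  if x < 1 then 25 * x else if x < 2 then x + 24 else 25 * x - 24

lemma lrpF_eq1 {y : ℝ} (h : y < 1) : lrpF y = 25 / 2 * y ^ 2 := by
  unfold lrpF; rw [if_pos h]

lemma lrpF_eq2 {y : ℝ} (h1 : 1 ≤ y) (h2 : y < 2) :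
    lrpF y = 1 / 2 * y ^ 2 + 24 * y - 12 := by
  unfold lrpF; rw [if_neg (not_lt.mpr h1), if_pos h2]

lemma lrpF_eq3 {y : ℝ} (h : 2 ≤ y) : lrpF y = 25 / 2 * y ^ 2 - 24 * y + 36 := by
  unfold lrpF
  rw [if_neg (not_lt.mpr (le_trans (by norm_num) h)), if_neg (not_lt.mpr h)]

lemma lrpG_eq1 {y : ℝ} (h : y < 1) : lrpG y = 25 * y := by
  unfold lrpG; rw [if_pos h]

lemma lrpG_eq2 {y : ℝ} (h1 : 1 ≤ y) (h2 : y < 2) : lrpG y = y + 24 := by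
  unfold lrpG; rw [if_neg (not_lt.mpr h1), if_pos h2]

lemma lrpG_eq3 {y : ℝ} (h : 2 ≤ y) : lrpG y = 25 * y - 24 := by
  unfold lrpG
  rw [if_neg (not_lt.mpr (le_trans (by norm_num) h)), if_neg (not_lt.mpr h)]

lemma p1_deriv (x : ℝ) : HasDerivAt (fun y : ℝ => 25 / 2 * y ^ 2) (25 * x) x := by
  have h := (hasDerivAt_pow 2 x).const_mul (25 / 2 : ℝ)
  exact h.congr_deriv (by push_cast; ring)

lemma p2_deriv (x : ℝ) : HasDerivAt (fun y : ℝ => 1 / 2 * y ^ 2 + 24 * y - 12) (x + 24) x := by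
  have h := (((hasDerivAt_pow 2 x).const_mul (1 / 2 : ℝ)).add
    ((hasDerivAt_id x).const_mul 24)).sub_const 12
  exact h.congr_deriv (by push_cast; ring)

lemma p3_deriv (x : ℝ) : HasDerivAt (fun y : ℝ => 25 / 2 * y ^ 2 - 24 * y + 36) (25 * x - 24) x := by
  have h := (((hasDerivAt_pow 2 x).const_mul (25 / 2 : ℝ)).sub
    ((hasDerivAt_id x).const_mul 24)).add_const 36
  exact h.congr_deriv (by push_cast; ring)

lemma lrpF_hasDerivAt (x : ℝ) : HasDerivAt lrpF (lrpG x) x := by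
  rcases lt_trichotomy x 1 with h1 | h1 | h1
  · have hev : lrpF =ᶠ[nhds x] (fun y : ℝ => 25 / 2 * y ^ 2) := by
      filter_upwards [Iio_mem_nhds h1] with y hy
      exact lrpF_eq1 hy
    rw [lrpG_eq1 h1]
    exact (p1_deriv x).congr_of_eventuallyEq hev
  · subst h1
    have hleft : HasDerivWithinAt lrpF 25 (Set.Iic (1:ℝ)) 1 := by
      have h := ((p1_deriv 1).hasDerivWithinAt (s := Set.Iic (1:ℝ)))
      rw [show (25:ℝ) * 1 = 25 by norm_num] at h
      refine h.congr (fun y hy => ?_) (by rw [lrpF_eq2 le_rfl (by norm_num)]; norm_num)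
      rcases lt_or_eq_of_le (Set.mem_Iic.mp hy) with h | h
      · exact lrpF_eq1 h
      · subst h; rw [lrpF_eq2 le_rfl (by norm_num)]; norm_num
    have hright : HasDerivWithinAt lrpF 25 (Set.Ici (1:ℝ)) 1 := by
      have h := ((p2_deriv 1).hasDerivWithinAt (s := Set.Ici (1:ℝ)))
      rw [show (1:ℝ) + 24 = 25 by norm_num] at h
      refine h.congr_of_eventuallyEq ?_ (lrpF_eq2 le_rfl (by norm_num))
      filter_upwards [nhdsWithin_le_nhds (Iio_mem_nhds (by norm_num : (1:ℝ) < 2)),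
        self_mem_nhdsWithin] with y hy2 hy1
      exact lrpF_eq2 (Set.mem_Ici.mp hy1) (Set.mem_Iio.mp hy2)
    have h := hleft.union hright
    rw [Set.Iic_union_Ici, hasDerivWithinAt_univ] at h
    rw [lrpG_eq2 le_rfl (by norm_num)]
    exact h.congr_deriv (by norm_num)
  · rcases lt_trichotomy x 2 with h2 | h2 | h2
    · have hev : lrpF =ᶠ[nhds x] (fun y : ℝ => 1 / 2 * y ^ 2 + 24 * y - 12) := by
        filter_upwards [Ioo_mem_nhds h1 h2] with y hy
        exact lrpF_eq2 (le_of_lt hy.1) hy.2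
      rw [lrpG_eq2 (le_of_lt h1) h2]
      exact (p2_deriv x).congr_of_eventuallyEq hev
    · subst h2
      have hleft : HasDerivWithinAt lrpF 26 (Set.Iic (2:ℝ)) 2 := by
        have h := ((p2_deriv 2).hasDerivWithinAt (s := Set.Iic (2:ℝ)))
        rw [show (2:ℝ) + 24 = 26 by norm_num] at h
        refine h.congr_of_eventuallyEq ?_ (by rw [lrpF_eq3 le_rfl]; norm_num)
        filter_upwards [nhdsWithin_le_nhds (Ioi_mem_nhds (by norm_num : (1:ℝ) < 2)),
          self_mem_nhdsWithin] with y hy1 hy2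
        rcases lt_or_eq_of_le (Set.mem_Iic.mp hy2) with h | h
        · exact lrpF_eq2 (le_of_lt (Set.mem_Ioi.mp hy1)) h
        · subst h; rw [lrpF_eq3 le_rfl]; norm_num
      have hright : HasDerivWithinAt lrpF 26 (Set.Ici (2:ℝ)) 2 := by
        have h := ((p3_deriv 2).hasDerivWithinAt (s := Set.Ici (2:ℝ)))
        rw [show (25:ℝ) * 2 - 24 = 26 by norm_num] at h
        exact h.congr (fun y hy => lrpF_eq3 (Set.mem_Ici.mp hy)) (lrpF_eq3 le_rfl)
      have h := hleft.union hright
      rw [Set.Iic_union_Ici, hasDerivWithinAt_univ] at h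
      rw [lrpG_eq3 le_rfl]
      exact h.congr_deriv (by norm_num)
    · have hev : lrpF =ᶠ[nhds x] (fun y : ℝ => 25 / 2 * y ^ 2 - 24 * y + 36) := by
        filter_upwards [Ioi_mem_nhds h2] with y hy
        exact lrpF_eq3 (le_of_lt (Set.mem_Ioi.mp hy))
      rw [lrpG_eq3 (le_of_lt h2)]
      exact (p3_deriv x).congr_of_eventuallyEq hev

lemma lrpF_deriv (x : ℝ) : deriv lrpF x = lrpG x := (lrpF_hasDerivAt x).deriv

lemma lrp_sector (x : ℝ) : (13 * x - lrpG x) * (25 * x - lrpG x) ≤ 0 := by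
  rcases lt_or_ge x 1 with h1 | h1
  · rw [lrpG_eq1 h1]; nlinarith
  · rcases lt_or_ge x 2 with h2 | h2
    · rw [lrpG_eq2 h1 h2]; nlinarith
    · rw [lrpG_eq3 h2]; nlinarith

lemma lrpG_bound_lo {y : ℝ} (hy : 0 ≤ y) : 13 * y ≤ lrpG y := by
  rcases lt_or_ge y 1 with h1 | h1
  · rw [lrpG_eq1 h1]; nlinarith
  · rcases lt_or_ge y 2 with h2 | h2
    · rw [lrpG_eq2 h1 h2]; nlinarith
    · rw [lrpG_eq3 h2]; nlinarith

lemma lrpG_bound_hi {y : ℝ} (hy : 0 ≤ y) : lrpG y ≤ 25 * y := by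
  rcases lt_or_ge y 1 with h1 | h1
  · rw [lrpG_eq1 h1]
  · rcases lt_or_ge y 2 with h2 | h2
    · rw [lrpG_eq2 h1 h2]; nlinarith
    · rw [lrpG_eq3 h2]; nlinarith

lemma lrpG_bound_lo' {y : ℝ} (hy : y ≤ 0) : 25 * y ≤ lrpG y := by
  rw [lrpG_eq1 (lt_of_le_of_lt hy (by norm_num))]

lemma lrpG_bound_hi' {y : ℝ} (hy : y ≤ 0) : lrpG y ≤ 13 * y := by
  rw [lrpG_eq1 (lt_of_le_of_lt hy (by norm_num))]; nlinarith

lemma sqrt13_lb : (3.605 : ℝ) ≤ Real.sqrt 13 := by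
  have h : (3.605 : ℝ) = Real.sqrt (3.605 ^ 2) := (Real.sqrt_sq (by norm_num)).symm
  rw [h]; exact Real.sqrt_le_sqrt (by norm_num)

lemma sqrt13_ub : Real.sqrt 13 ≤ 3.606 := by
  have h : (3.606 : ℝ) = Real.sqrt (3.606 ^ 2) := (Real.sqrt_sq (by norm_num)).symm
  rw [h]; exact Real.sqrt_le_sqrt (by norm_num)

lemma lrp_coeffs (α β : ℝ) (hα : α = 4 / (5 + Real.sqrt 13) ^ 2)
    (hβ : β = ((5 - Real.sqrt 13) / (5 + Real.sqrt 13)) ^ 2) :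
    0 ≤ α ∧ 0 ≤ β ∧ β ≤ 0.03 ∧ 1 + β - 13 * α ≤ 0.34 ∧ -0.34 ≤ 1 + β - 25 * α := by
  set s := Real.sqrt 13 with hs
  have hs2 : s ^ 2 = 13 := Real.sq_sqrt (by norm_num)
  have hlb := sqrt13_lb
  have hub := sqrt13_ub
  have hd : (5 + s) ^ 2 = 38 + 10 * s := by nlinarith
  have hdpos : (0:ℝ) < 38 + 10 * s := by linarith
  have hαd : α * (38 + 10 * s) = 4 := by
    rw [hα, hd]; field_simp
  have hβd : β * (38 + 10 * s) = 38 - 10 * s := by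
    rw [hβ, div_pow, hd]
    have : (5 - s) ^ 2 = 38 - 10 * s := by nlinarith
    rw [this]; field_simp
  have hA0 : 0 ≤ α := by nlinarith
  have hB0 : 0 ≤ β := by nlinarith
  have hA1 : α ≤ 0.05402 := by nlinarith
  have hA2 : 0.054 ≤ α := by nlinarith
  have hB1 : β ≤ 0.02634 := by nlinarith
  have hB2 : 0.0261 ≤ β := by nlinarith
  exact ⟨hA0, hB0, by linarith, by linarith, by linarith⟩

lemma lrp_step_bound (α β : ℝ) (hα : α = 4 / (5 + Real.sqrt 13) ^ 2)
    (hβ : β = ((5 - Real.sqrt 13) / (5 + Real.sqrt 13)) ^ 2) (y : ℝ) :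
    |(1 + β) * y - α * lrpG y| ≤ 0.34 * |y| := by
  obtain ⟨hA0, hB0, _, hK1, hK2⟩ := lrp_coeffs α β hα hβ
  rcases le_or_gt 0 y with hy | hy
  · rw [abs_of_nonneg hy, abs_le]
    constructor
    · have h := mul_le_mul_of_nonneg_left (lrpG_bound_hi hy) hA0
      nlinarith [mul_nonneg (by linarith : (0:ℝ) ≤ (1 + β - 25 * α) - (-0.34)) hy]
    · have h := mul_le_mul_of_nonneg_left (lrpG_bound_lo hy) hA0
      nlinarith [mul_nonneg (by linarith : (0:ℝ) ≤ 0.34 - (1 + β - 13 * α)) hy]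
  · rw [abs_of_neg hy, abs_le]
    constructor
    · have h := mul_le_mul_of_nonneg_left (lrpG_bound_hi' (le_of_lt hy)) hA0
      nlinarith [mul_nonneg (by linarith : (0:ℝ) ≤ 0.34 - (1 + β - 13 * α)) (by linarith : (0:ℝ) ≤ -y)]
    · have h := mul_le_mul_of_nonneg_left (lrpG_bound_lo' (le_of_lt hy)) hA0
      nlinarith [mul_nonneg (by linarith : (0:ℝ) ≤ (1 + β - 25 * α) - (-0.34)) (by linarith : (0:ℝ) ≤ -y)]

/-- Lessard–Recht–Packard's piecewise quadratic example: the function is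
differentiable, attains its minimum at `x* = 0`, satisfies the sector
condition with `m = 13`, `L = 25`; since `25/13 < 3 + 2√2`, the heavy ball
method with Polyak's parameters tuned to `m = 13`, `L = 25` converges to `0`
from every pair of initial points. -/
theorem lessard_example_global_convergence
    (f : ℝ → ℝ)
    (hf : ∀ x : ℝ, f x =
      if x < 1 then 25 / 2 * x ^ 2
      else if x < 2 then 1 / 2 * x ^ 2 + 24 * x - 12
      else 25 / 2 * x ^ 2 - 24 * x + 36)
    (α β : ℝ)
    (hα : α = 4 / (5 + Real.sqrt 13) ^ 2)
    (hβ : β = ((5 - Real.sqrt 13) / (5 + Real.sqrt 13)) ^ 2) :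
    Differentiable ℝ f ∧
    (∀ x : ℝ, f 0 ≤ f x) ∧
    (∀ x : ℝ, (13 * x - deriv f x) * (25 * x - deriv f x) ≤ 0) ∧
    (25 / 13 : ℝ) < 3 + 2 * Real.sqrt 2 ∧
    (∀ x : ℕ → ℝ,
      (∀ t, x (t + 2) = x (t + 1) - α * deriv f (x (t + 1)) + β * (x (t + 1) - x t)) →
      Tendsto x atTop (nhds 0)) := by
  have hfF : f = lrpF := funext fun x => (hf x).trans rfl
  subst hfF
  refine ⟨fun x => (lrpF_hasDerivAt x).differentiableAt, ?_, ?_, ?_, ?_⟩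
  · intro x
    have h0 : lrpF 0 = 0 := by rw [lrpF_eq1 (by norm_num)]; norm_num
    rw [h0]
    rcases lt_or_ge x 1 with h1 | h1
    · rw [lrpF_eq1 h1]; positivity
    · rcases lt_or_ge x 2 with h2 | h2
      · rw [lrpF_eq2 h1 h2]; nlinarith
      · rw [lrpF_eq3 h2]; nlinarith
  · intro x
    rw [lrpF_deriv]
    exact lrp_sector x
  · have h : (1.4 : ℝ) ≤ Real.sqrt 2 := by
      have h2 : (1.4 : ℝ) = Real.sqrt (1.4 ^ 2) := (Real.sqrt_sq (by norm_num)).symm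
      rw [h2]; exact Real.sqrt_le_sqrt (by norm_num)
    linarith
  · intro x hrec
    obtain ⟨hA0, hB0, hB3, _, _⟩ := lrp_coeffs α β hα hβ
    have hstep : ∀ t, |x (t + 2)| ≤ 0.34 * |x (t + 1)| + 0.03 * |x t| := by
      intro t
      have h1 : x (t + 2) = ((1 + β) * x (t + 1) - α * lrpG (x (t + 1))) - β * x t := by
        rw [hrec t, lrpF_deriv]; ring
      calc |x (t + 2)| ≤ |(1 + β) * x (t + 1) - α * lrpG (x (t + 1))| + |β * x t| := by
            rw [h1]; exact abs_sub _ _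
        _ ≤ 0.34 * |x (t + 1)| + 0.03 * |x t| := by
            have h2 := lrp_step_bound α β hα hβ (x (t + 1))
            have h3 : |β * x t| ≤ 0.03 * |x t| := by
              rw [abs_mul, abs_of_nonneg hB0]
              exact mul_le_mul_of_nonneg_right hB3 (abs_nonneg _)
            linarith
    set V : ℕ → ℝ := fun t => |x (t + 1)| + 0.1 * |x t| with hV
    have hVstep : ∀ t, V (t + 1) ≤ 0.44 * V t := by
      intro t
      have h1 := hstep t
      have h2 : (0:ℝ) ≤ |x t| := abs_nonneg _
      have h3 : (0:ℝ) ≤ |x (t + 1)| := abs_nonneg _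
      simp only [hV]
      calc |x (t + 1 + 1)| + 0.1 * |x (t + 1)|
          ≤ (0.34 * |x (t + 1)| + 0.03 * |x t|) + 0.1 * |x (t + 1)| := by
            have : t + 1 + 1 = t + 2 := rfl
            rw [this]; linarith
        _ ≤ 0.44 * (|x (t + 1)| + 0.1 * |x t|) := by linarith
    have hVgeo : ∀ t, V t ≤ 0.44 ^ t * V 0 := by
      intro t
      induction t with
      | zero => simp
      | succ n ih =>
        calc V (n + 1) ≤ 0.44 * V n := hVstep n
          _ ≤ 0.44 * (0.44 ^ n * V 0) := by linarith [mul_le_mul_of_nonneg_left ih (by norm_num : (0:ℝ) ≤ 0.44)]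
          _ = 0.44 ^ (n + 1) * V 0 := by ring
    have hlim : Tendsto (fun t : ℕ => (0.44 : ℝ) ^ t * V 0) atTop (nhds 0) := by
      have h := (tendsto_pow_atTop_nhds_zero_of_lt_one (by norm_num : (0:ℝ) ≤ 0.44)
        (by norm_num : (0.44:ℝ) < 1)).mul_const (V 0)
      simpa using h
    have hx1 : Tendsto (fun t : ℕ => x (t + 1)) atTop (nhds 0) := by
      refine squeeze_zero_norm (fun t => ?_) hlim
      have h1 : |x (t + 1)| ≤ V t := by
        simp only [hV]
        have : (0:ℝ) ≤ 0.1 * |x t| := by positivity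
        linarith
      calc ‖x (t + 1)‖ = |x (t + 1)| := rfl
        _ ≤ V t := h1
        _ ≤ 0.44 ^ t * V 0 := hVgeo t
    exact (tendsto_add_atTop_iff_nat 1).mp hx1
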